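/- Let J satisfy (H1)-(H2), be compactly supported, and let β ∈ C(ℝ^N) be bounded with limsup_{|x|→∞} β(x) < 0. Then there exist α > 0, R₀ > 0 and a constant h < 0 such that the function w(x) = C e^{−α|x|} (any C > 0) satisfies (J⋆w)(x) − w(x) + β(x)w(x) ≤ h·w(x) < 0 for all |x| ≥ R₀. -/

import Mathlib

open MeasureTheory Real Filter

noncomputable section

theorem stmt_7 (N : ℕ)
    (J β : EuclideanSpace ℝ (Fin N) → ℝ)
    (hJc : Continuous J) (hJpos : ∀ z, 0 ≤ J z) (hJsym : ∀ z, J (-z) = J z)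
    (hJint : Integrable J) (hJmass : ∫ z, J z = 1) (hJ0 : 0 < J 0)
    (hJcs : HasCompactSupport J)
    (hβc : Continuous β) (hβbd : ∃ C, ∀ x, |β x| ≤ C)
    (hβlim : limsup β (cocompact (EuclideanSpace ℝ (Fin N))) < 0) :
    ∃ α > (0:ℝ), ∃ R₀ > (0:ℝ), ∃ h < (0:ℝ), ∀ C > (0:ℝ),
      ∀ x : EuclideanSpace ℝ (Fin N), R₀ ≤ ‖x‖ →
        (∫ y, J (x - y) * (C * Real.exp (-α * ‖y‖)))
            - C * Real.exp (-α * ‖x‖) + β x * (C * Real.exp (-α * ‖x‖))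
          ≤ h * (C * Real.exp (-α * ‖x‖)) ∧
        h * (C * Real.exp (-α * ‖x‖)) < 0 := by
  obtain ⟨Cb, hCb⟩ := hβbd
  set L := limsup β (cocompact (EuclideanSpace ℝ (Fin N))) with hLdef
  set ν : ℝ := -L/2 with hνdef
  have hν : (0:ℝ) < ν := by simp only [hνdef]; linarith
  have hev : ∀ᶠ x in cocompact (EuclideanSpace ℝ (Fin N)), β x < -ν := by
    apply eventually_lt_of_limsup_lt
    · rw [← hLdef]; simp only [hνdef]; linarith
    · exact isBoundedUnder_of ⟨Cb, fun x => (abs_le.mp (hCb x)).2⟩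
  obtain ⟨K, hK, hKβ⟩ := hasBasis_cocompact.eventually_iff.mp hev
  obtain ⟨r, hr⟩ := hK.isBounded.subset_closedBall 0
  obtain ⟨rJ, hrJ⟩ := hJcs.isBounded.subset_closedBall 0
  set M : ℝ := max rJ 1 with hMdef
  have hM1 : (1:ℝ) ≤ M := le_max_right _ _
  have hM0 : (0:ℝ) < M := by linarith
  set α : ℝ := Real.log (1 + ν/2) / M with hαdef
  have hαpos : 0 < α := div_pos (Real.log_pos (by linarith)) hM0
  have hexp : Real.exp (α * M) = 1 + ν/2 := by
    rw [hαdef, div_mul_cancel₀ _ (ne_of_gt hM0)]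
    exact Real.exp_log (by linarith)
  have hJsupp : ∀ z, M < ‖z‖ → J z = 0 := by
    intro z hz
    by_contra h0
    have hmem : z ∈ tsupport J := subset_tsupport J (by simpa using h0)
    have := hrJ hmem
    rw [Metric.mem_closedBall, dist_zero_right] at this
    have : ‖z‖ ≤ M := le_trans this (le_max_left _ _)
    linarith
  refine ⟨α, hαpos, max r 0 + 1, by positivity, -ν/2, by linarith, ?_⟩
  intro C hC x hx
  have hw : 0 < C * Real.exp (-α * ‖x‖) := by positivity
  have hβx : β x ≤ -ν := by
    refine le_of_lt (hKβ ?_)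
    intro hxK
    have := hr hxK
    rw [Metric.mem_closedBall, dist_zero_right] at this
    have : ‖x‖ ≤ max r 0 := le_trans this (le_max_left _ _)
    linarith
  have hJx : Continuous fun y : EuclideanSpace ℝ (Fin N) => J (x - y) :=
    hJc.comp (continuous_const.sub continuous_id)
  have hJxcs : HasCompactSupport fun y : EuclideanSpace ℝ (Fin N) => J (x - y) := by
    have := hJcs.comp_homeomorph (Homeomorph.subLeft x)
    simpa [Function.comp_def] using this
  have hpt : ∀ y, J (x - y) * (C * Real.exp (-α * ‖y‖))
      ≤ J (x - y) * (C * (Real.exp (α * M) * Real.exp (-α * ‖x‖))) := by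
    intro y
    rcases eq_or_lt_of_le (hJpos (x - y)) with h0 | h0
    · simp [← h0]
    · have hxy : ‖x - y‖ ≤ M := by
        by_contra hc; push_neg at hc
        exact absurd (hJsupp _ hc) (by linarith)
      have hy : ‖x‖ - M ≤ ‖y‖ := by
        have := norm_sub_norm_le x y
        linarith
      have he : Real.exp (-α * ‖y‖) ≤ Real.exp (α * M) * Real.exp (-α * ‖x‖) := by
        rw [← Real.exp_add]
        apply Real.exp_le_exp.mpr
        nlinarith [hαpos.le]
      have := mul_le_mul_of_nonneg_left he hC.le
      nlinarith [hJpos (x - y)]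
  have hint1 : Integrable (fun y => J (x - y) * (C * Real.exp (-α * ‖y‖))) := by
    apply Continuous.integrable_of_hasCompactSupport
    · exact hJx.mul (by fun_prop)
    · exact hJxcs.mul_right
  have hint2 : Integrable (fun y => J (x - y) * (C * (Real.exp (α * M) * Real.exp (-α * ‖x‖)))) :=
    (hJx.integrable_of_hasCompactSupport hJxcs).mul_const _
  have hIle : (∫ y, J (x - y) * (C * Real.exp (-α * ‖y‖)))
      ≤ C * ((1 + ν/2) * Real.exp (-α * ‖x‖)) := by
    calc (∫ y, J (x - y) * (C * Real.exp (-α * ‖y‖)))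
        ≤ ∫ y, J (x - y) * (C * (Real.exp (α * M) * Real.exp (-α * ‖x‖))) :=
          integral_mono hint1 hint2 hpt
      _ = (∫ y, J (x - y)) * (C * (Real.exp (α * M) * Real.exp (-α * ‖x‖))) :=
          integral_mul_const _ _
      _ = C * ((1 + ν/2) * Real.exp (-α * ‖x‖)) := by
          rw [integral_sub_left_eq_self J volume x, hJmass, hexp]; ring
  constructor
  · have hβw : β x * (C * Real.exp (-α * ‖x‖)) ≤ -ν * (C * Real.exp (-α * ‖x‖)) :=
      mul_le_mul_of_nonneg_right hβx hw.le
    nlinarith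
  · have : (-ν/2) < 0 := by linarith
    exact mul_neg_of_neg_of_pos this hw
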